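/- Let N ≥ 5 and s be integers with 3 ≤ s ≤ binom(N,2) + 1, and let 𝓠 consist of ∅, [N], all 1-element subsets of [N], and all (N−1)-element subsets of [N]. Then 1 + 2(s−1)/(N(N−1)) ≤ L ≤ 1 + 4(s−1)/(N(N−1)), where L denotes the maximum of lu_N(𝓕) over all M_s-free families 𝓕 of subsets of [N] disjoint from 𝓠. -/
import Mathlib


/-- The Lubell function of a family of subsets of `[N]`. -/
def lubell (N : ℕ) (F : Finset (Finset (Fin N))) : ℚ :=
  ∑ A ∈ F, (1 : ℚ) / (N.choose A.card)

/-- The family `G` of subsets of `[N]` contains a copy of the matching `M_s`: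
there are `2s` pairwise distinct members `A_1, …, A_s, B_1, …, B_s` of `G`
with `A_i ⊆ B_i` for each `i`. -/
def ContainsMatching (N s : ℕ) (G : Finset (Finset (Fin N))) : Prop :=
  ∃ f : Fin s ⊕ Fin s → Finset (Fin N), Function.Injective f ∧
    (∀ x, f x ∈ G) ∧ ∀ i : Fin s, f (Sum.inl i) ⊆ f (Sum.inr i)

/-! ### Auxiliary lemmas -/

lemma choose_mono_half (n : ℕ) : ∀ a b, a ≤ b → b ≤ n / 2 → n.choose a ≤ n.choose b := by
  intro a b hab
  induction b, hab using Nat.le_induction with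
  | base => intro _; exact le_rfl
  | succ b hb ih =>
    intro h
    exact (ih (by omega)).trans (Nat.choose_le_succ_of_lt_half_left (by omega))

lemma choose_two_le {N k : ℕ} (h2 : 2 ≤ k) (hk : k ≤ N - 2) (hN : 5 ≤ N) :
    N.choose 2 ≤ N.choose k := by
  rcases le_or_gt k (N / 2) with h | h
  · exact choose_mono_half N 2 k h2 h
  · have hkN : k ≤ N := by omega
    rw [← Nat.choose_symm hkN]
    exact choose_mono_half N 2 (N - k) (by omega) (by omega)

open Finset in
lemma lubell_le_one {N : ℕ} {𝒜 : Finset (Finset (Fin N))}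
    (h : IsAntichain (· ⊆ ·) (𝒜 : Set (Finset (Fin N)))) : lubell N 𝒜 ≤ 1 := by
  classical
  have hlym := Finset.sum_card_slice_div_choose_le_one (𝕜 := ℚ) h
  rw [Fintype.card_fin] at hlym
  have heq : lubell N 𝒜 = ∑ r ∈ range (N + 1), (#(𝒜 # r) : ℚ) / (N.choose r) := by
    rw [lubell, ← Finset.sum_fiberwise_of_maps_to (g := Finset.card) (t := range (N + 1))
      (fun A hA => by simp [Nat.lt_succ_iff]; simpa using Finset.card_le_univ A)]
    refine Finset.sum_congr rfl fun r _ => ?_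
    have : ∑ A ∈ 𝒜.filter (fun A => A.card = r), (1 : ℚ) / (N.choose A.card)
        = ∑ A ∈ 𝒜.filter (fun A => A.card = r), (1 : ℚ) / (N.choose r) := by
      refine Finset.sum_congr rfl fun A hA => ?_
      rw [(Finset.mem_filter.1 hA).2]
    rw [this, Finset.sum_const, Finset.slice, nsmul_eq_mul]
    ring
  rw [heq]; exact hlym

lemma antichain_of_not_cm_one {N : ℕ} {F : Finset (Finset (Fin N))}
    (h : ¬ ContainsMatching N 1 F) : IsAntichain (· ⊆ ·) (F : Set (Finset (Fin N))) := by
  intro A hA B hB hne hsub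
  refine h ⟨Sum.elim (fun _ => A) (fun _ => B), ?_, ?_, fun i => hsub⟩
  · intro x y hxy
    rcases x with i | i <;> rcases y with j | j <;>
      simp only [Sum.elim_inl, Sum.elim_inr] at hxy
    · exact congrArg Sum.inl (Subsingleton.elim i j)
    · exact absurd hxy hne
    · exact absurd hxy.symm hne
    · exact congrArg Sum.inr (Subsingleton.elim i j)
  · intro x; rcases x with i | i <;> simpa

lemma cm_extend {N s : ℕ} {F : Finset (Finset (Fin N))} {A B : Finset (Fin N)}
    (hA : A ∈ F) (hB : B ∈ F) (hAB : A ≠ B) (hsub : A ⊆ B)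
    (h : ContainsMatching N s ((F.erase A).erase B)) : ContainsMatching N (s + 1) F := by
  obtain ⟨f, hinj, hmem, hchain⟩ := h
  have hfA : ∀ x, f x ≠ A := fun x => by
    have := hmem x; rw [Finset.mem_erase, Finset.mem_erase] at this; exact this.2.1
  have hfB : ∀ x, f x ≠ B := fun x => by
    have := hmem x; rw [Finset.mem_erase] at this; exact this.1
  have hfF : ∀ x, f x ∈ F := fun x => by
    have := hmem x; rw [Finset.mem_erase, Finset.mem_erase] at this; exact this.2.2
  refine ⟨Sum.elim
      (fun i : Fin (s+1) => if h : (i : ℕ) < s then f (Sum.inl ⟨i, h⟩) else A)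
      (fun i : Fin (s+1) => if h : (i : ℕ) < s then f (Sum.inr ⟨i, h⟩) else B),
    ?_, ?_, ?_⟩
  · intro x y hxy
    rcases x with i | i <;> rcases y with j | j <;> simp only [Sum.elim_inl, Sum.elim_inr] at hxy <;>
      split_ifs at hxy with h1 h2 h2
    · have := hinj hxy; simp only [Sum.inl.injEq, Fin.mk.injEq] at this
      exact congrArg Sum.inl (Fin.ext this)
    · exact absurd hxy (hfA _)
    · exact absurd hxy.symm (hfA _)
    · exact congrArg Sum.inl (Fin.ext (by omega))
    · have := hinj hxy; simp at this
    · exact absurd hxy (hfB _)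
    · exact absurd hxy.symm (hfA _)
    · exact absurd hxy hAB
    · have := hinj hxy; simp at this
    · exact absurd hxy (hfA _)
    · exact absurd hxy.symm (hfB _)
    · exact absurd hxy.symm hAB
    · have := hinj hxy; simp only [Sum.inr.injEq, Fin.mk.injEq] at this
      exact congrArg Sum.inr (Fin.ext this)
    · exact absurd hxy (hfB _)
    · exact absurd hxy.symm (hfB _)
    · exact congrArg Sum.inr (Fin.ext (by omega))
  · intro x
    rcases x with i | i <;> simp only [Sum.elim_inl, Sum.elim_inr] <;> split_ifs
    · exact hfF _
    · exact hA
    · exact hfF _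
    · exact hB
  · intro i
    simp only [Sum.elim_inl, Sum.elim_inr]
    split_ifs with h1
    · exact hchain _
    · exact hsub

lemma key_antichain {N : ℕ} : ∀ (t : ℕ) (F : Finset (Finset (Fin N))),
    ¬ ContainsMatching N (t + 1) F →
    ∃ G ⊆ F, G.card ≤ 2 * t ∧
      IsAntichain (· ⊆ ·) ((F \ G : Finset (Finset (Fin N))) : Set (Finset (Fin N))) := by
  intro t
  induction t with
  | zero =>
    intro F h
    exact ⟨∅, Finset.empty_subset _, by simp,
      by rw [Finset.sdiff_empty]; exact antichain_of_not_cm_one h⟩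
  | succ t ih =>
    intro F h
    by_cases hac : IsAntichain (· ⊆ ·) (F : Set (Finset (Fin N)))
    · exact ⟨∅, Finset.empty_subset _, by simp, by rw [Finset.sdiff_empty]; exact hac⟩
    · obtain ⟨A, hA, B, hB, hne, hsub⟩ : ∃ A ∈ F, ∃ B ∈ F, A ≠ B ∧ A ⊆ B := by
        by_contra hno
        push_neg at hno
        exact hac fun a ha b hb hne hsub => hno a ha b hb hne hsub
      have h' : ¬ ContainsMatching N (t + 1) ((F.erase A).erase B) :=
        fun hc => h (cm_extend hA hB hne hsub hc)
      obtain ⟨G', hG'sub, hG'card, hG'anti⟩ := ih _ h'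
      refine ⟨insert A (insert B G'), ?_, ?_, ?_⟩
      · intro x hx
        simp only [Finset.mem_insert] at hx
        rcases hx with rfl | rfl | hx
        · exact hA
        · exact hB
        · exact (Finset.erase_subset _ _) ((Finset.erase_subset _ _) (hG'sub hx))
      · calc (insert A (insert B G')).card ≤ (insert B G').card + 1 := Finset.card_insert_le _ _
          _ ≤ G'.card + 1 + 1 := by have := Finset.card_insert_le B G'; omega
          _ ≤ 2 * (t + 1) := by omega
      · have : F \ insert A (insert B G') = ((F.erase A).erase B) \ G' := by
          ext x
          simp only [Finset.mem_sdiff, Finset.mem_insert, Finset.mem_erase]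
          tauto
        rw [this]; exact hG'anti

theorem stmt3 (N s : ℕ) (hN : 5 ≤ N) (hs : 3 ≤ s) (hs' : s ≤ N.choose 2 + 1)
    (L : ℚ)
    (hL : IsGreatest {x : ℚ | ∃ F : Finset (Finset (Fin N)),
        (∀ A ∈ F, A ≠ ∅ ∧ A ≠ Finset.univ ∧ A.card ≠ 1 ∧ A.card ≠ N - 1) ∧
        ¬ ContainsMatching N s F ∧ lubell N F = x} L) :
    1 + 2 * ((s : ℚ) - 1) / ((N : ℚ) * ((N : ℚ) - 1)) ≤ L ∧
      L ≤ 1 + 4 * ((s : ℚ) - 1) / ((N : ℚ) * ((N : ℚ) - 1)) := by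
  classical
  have hc0 : (0 : ℚ) < (N.choose 2 : ℚ) := by
    exact_mod_cast Nat.choose_pos (by omega : 2 ≤ N)
  have hc2nat : N.choose 2 * 2 = N * (N - 1) := by
    rw [Nat.choose_two_right]
    refine Nat.div_mul_cancel ?_
    have := Nat.even_mul_succ_self (N - 1)
    have hN1 : N - 1 + 1 = N := by omega
    rw [hN1] at this
    rw [mul_comm]
    exact this.two_dvd
  have hc2 : (N.choose 2 : ℚ) * 2 = (N : ℚ) * ((N : ℚ) - 1) := by
    have := congrArg (fun k : ℕ => (k : ℚ)) hc2nat
    push_cast [Nat.cast_sub (by omega : 1 ≤ N)] at this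
    linarith
  have hcsub : ((s - 1 : ℕ) : ℚ) = (s : ℚ) - 1 := by
    push_cast [Nat.cast_sub (by omega : 1 ≤ s)]; ring
  constructor
  · -- lower bound via explicit construction
    set P2 := Finset.powersetCard 2 (Finset.univ : Finset (Fin N)) with hP2def
    set PB := Finset.powersetCard (N - 2) (Finset.univ : Finset (Fin N)) with hPBdef
    have hPBcard : PB.card = N.choose 2 := by
      rw [hPBdef, Finset.card_powersetCard, Finset.card_univ, Fintype.card_fin,
        Nat.choose_symm (by omega : 2 ≤ N)]
    have hP2card : P2.card = N.choose 2 := by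
      rw [hP2def, Finset.card_powersetCard, Finset.card_univ, Fintype.card_fin]
    obtain ⟨T, hTsub, hTcard⟩ := Finset.exists_subset_card_eq
      (show s - 1 ≤ PB.card by rw [hPBcard]; omega)
    have hTmemcard : ∀ A ∈ T, A.card = N - 2 := fun A hA =>
      (Finset.mem_powersetCard.1 (hTsub hA)).2
    have hP2memcard : ∀ A ∈ P2, A.card = 2 := fun A hA =>
      (Finset.mem_powersetCard.1 hA).2
    have hdisj : Disjoint P2 T := by
      rw [Finset.disjoint_left]
      intro A hA hA'
      have := hP2memcard A hA
      have := hTmemcard A hA'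
      omega
    set F := P2 ∪ T with hFdef
    have hcards : ∀ A ∈ F, A.card = 2 ∨ A.card = N - 2 := by
      intro A hA
      rcases Finset.mem_union.1 hA with h | h
      · exact Or.inl (hP2memcard A h)
      · exact Or.inr (hTmemcard A h)
    have hQ : ∀ A ∈ F, A ≠ ∅ ∧ A ≠ Finset.univ ∧ A.card ≠ 1 ∧ A.card ≠ N - 1 := by
      intro A hA
      have hc := hcards A hA
      refine ⟨?_, ?_, by omega, by omega⟩
      · intro h; rw [h] at hc; simp at hc; omega
      · intro h
        rw [h, Finset.card_univ, Fintype.card_fin] at hc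
        omega
    have hM : ¬ ContainsMatching N s F := by
      rintro ⟨f, hinj, hmem, hchain⟩
      have hTmem : ∀ i : Fin s, f (Sum.inr i) ∈ T := by
        intro i
        have hlt : (f (Sum.inl i)).card < (f (Sum.inr i)).card := by
          refine Finset.card_lt_card (Finset.ssubset_iff_subset_ne.2 ⟨hchain i, fun he => ?_⟩)
          have := hinj he
          simp at this
        rcases Finset.mem_union.1 (hmem (Sum.inr i)) with h | h
        · exfalso
          have h2 := hP2memcard _ h
          have := hcards _ (hmem (Sum.inl i))
          omega
        · exact h
      have hle : s ≤ T.card := by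
        have := Finset.card_le_card_of_injOn (s := (Finset.univ : Finset (Fin s))) (fun i : Fin s => f (Sum.inr i))
          (fun i _ => hTmem i)
          (fun i _ j _ h => by
            have := hinj h
            simpa using this)
        simpa using this
      omega
    have hval : lubell N F = 1 + ((s - 1 : ℕ) : ℚ) / (N.choose 2 : ℚ) := by
      rw [hFdef, lubell, Finset.sum_union hdisj]
      have h1 : ∑ A ∈ P2, (1 : ℚ) / (N.choose A.card) = 1 := by
        rw [Finset.sum_congr rfl (fun A hA => by rw [hP2memcard A hA]),
          Finset.sum_const, hP2card, nsmul_eq_mul]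
        field_simp
      have h2 : ∑ A ∈ T, (1 : ℚ) / (N.choose A.card)
          = ((s - 1 : ℕ) : ℚ) / (N.choose 2 : ℚ) := by
        rw [Finset.sum_congr rfl (fun A hA => by
          rw [hTmemcard A hA, Nat.choose_symm (by omega : 2 ≤ N)]),
          Finset.sum_const, hTcard, nsmul_eq_mul]
        ring
      rw [h1, h2]
    have hmemL : lubell N F ≤ L := hL.2 ⟨F, hQ, hM, rfl⟩
    have harith : 1 + 2 * ((s : ℚ) - 1) / ((N : ℚ) * ((N : ℚ) - 1))
        = 1 + ((s - 1 : ℕ) : ℚ) / (N.choose 2 : ℚ) := by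
      rw [hcsub, ← hc2, show (2 : ℚ) * ((s : ℚ) - 1) = ((s : ℚ) - 1) * 2 by ring,
        mul_div_mul_right _ _ (two_ne_zero)]
    rw [harith, ← hval]
    exact hmemL
  · -- upper bound
    obtain ⟨F, hQ, hM, hFval⟩ := hL.1
    obtain ⟨G, hGsub, hGcard, hanti⟩ := key_antichain (s - 1) F
      (by rwa [Nat.sub_add_cancel (by omega : 1 ≤ s)])
    have hGcards : ∀ A ∈ G, 2 ≤ A.card ∧ A.card ≤ N - 2 := by
      intro A hA
      obtain ⟨hne, hnu, h1, hN1⟩ := hQ A (hGsub hA)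
      have hpos : A.card ≠ 0 := fun h => hne (Finset.card_eq_zero.1 h)
      have hle : A.card ≤ N := by simpa using Finset.card_le_univ A
      have hltN : A.card ≠ N := by
        intro h
        exact hnu (Finset.card_eq_iff_eq_univ A |>.1 (by simp [h]))
      exact ⟨by omega, by omega⟩
    have h1 : lubell N (F \ G) ≤ 1 := lubell_le_one hanti
    have h2 : lubell N G ≤ (G.card : ℚ) * (1 / (N.choose 2 : ℚ)) := by
      rw [lubell, ← nsmul_eq_mul]
      refine Finset.sum_le_card_nsmul G _ _ fun A hA => ?_
      obtain ⟨ha2, haN⟩ := hGcards A hA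
      have hle : N.choose 2 ≤ N.choose A.card := choose_two_le ha2 haN hN
      have hpos : (0 : ℚ) < (N.choose A.card : ℚ) := by
        exact_mod_cast Nat.choose_pos (by omega : A.card ≤ N)
      exact one_div_le_one_div_of_le hc0 (by exact_mod_cast hle)
    have hsplit : lubell N F = lubell N (F \ G) + lubell N G := by
      rw [lubell, lubell, lubell, Finset.sum_sdiff hGsub]
    have hup : lubell N F ≤ 1 + (2 * (s - 1 : ℕ) : ℚ) / (N.choose 2 : ℚ) := by
      rw [hsplit]
      have hGle : (G.card : ℚ) ≤ (2 * (s - 1 : ℕ) : ℚ) := by exact_mod_cast hGcard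
      have : (G.card : ℚ) * (1 / (N.choose 2 : ℚ))
          ≤ (2 * (s - 1 : ℕ) : ℚ) / (N.choose 2 : ℚ) := by
        rw [mul_one_div]
        exact (div_le_div_iff_of_pos_right hc0).2 hGle
      linarith
    have harith : 1 + 4 * ((s : ℚ) - 1) / ((N : ℚ) * ((N : ℚ) - 1))
        = 1 + (2 * (s - 1 : ℕ) : ℚ) / (N.choose 2 : ℚ) := by
      have : ((2 * (s - 1 : ℕ) : ℕ) : ℚ) = 2 * ((s : ℚ) - 1) := by
        push_cast [Nat.cast_sub (by omega : 1 ≤ s)]; ring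
      rw [← hc2, show (4 : ℚ) * ((s : ℚ) - 1) = 2 * ((s : ℚ) - 1) * 2 by ring,
        mul_div_mul_right _ _ (two_ne_zero)]
      push_cast [Nat.cast_sub (by omega : 1 ≤ s)]
      ring
    rw [harith, ← hFval]
    exact hup
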